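/- Let d ≥ 2 and let β be the d-Bonacci number. Every element of ℤ[β] is congruent modulo (β-1)ℤ[β] to exactly one of 0, 1, 2, ..., d-2; equivalently, the quotient ring ℤ[β]/(β-1)ℤ[β] has exactly d-1 elements. -/

import Mathlib

open Polynomial Finset

lemma gderiv (d : ℕ) (hd : 2 ≤ d) (x : ℝ) :
    HasDerivAt (fun x : ℝ => x ^ d * (2 - x)) (x ^ (d-1) * (2*d - (d+1)*x)) x := by
  have h := (hasDerivAt_pow d x).mul ((hasDerivAt_id x).const_sub 2)
  convert h using 1
  · rfl
  · rfl
  · rfl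
  have hx : x ^ d = x ^ (d-1) * x := by
    rw [← pow_succ]; congr 1; omega
  simp only [id]
  rw [hx]; push_cast; ring

lemma gmono (d : ℕ) (hd : 2 ≤ d) :
    StrictMonoOn (fun x : ℝ => x ^ d * (2 - x)) (Set.Icc 1 (2*d/(d+1))) := by
  apply strictMonoOn_of_deriv_pos (convex_Icc _ _)
  · fun_prop
  · intro x hx
    rw [interior_Icc, Set.mem_Ioo] at hx
    rw [(gderiv d hd x).deriv]
    have hd1 : (0:ℝ) < (d:ℝ) + 1 := by positivity
    have h2 : (d+1 : ℝ) * x < 2*d := by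
      have := (lt_div_iff₀ hd1).mp hx.2
      linarith
    have hx0 : (0:ℝ) < x := lt_trans one_pos hx.1
    have := pow_pos hx0 (d-1)
    nlinarith

lemma ganti (d : ℕ) (hd : 2 ≤ d) :
    StrictAntiOn (fun x : ℝ => x ^ d * (2 - x)) (Set.Icc (2*d/(d+1)) 2) := by
  apply strictAntiOn_of_deriv_neg (convex_Icc _ _)
  · fun_prop
  · intro x hx
    rw [interior_Icc, Set.mem_Ioo] at hx
    rw [(gderiv d hd x).deriv]
    have hd1 : (0:ℝ) < (d:ℝ) + 1 := by positivity
    have h2 : 2*(d:ℝ) < (d+1) * x := by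
      have := (div_lt_iff₀ hd1).mp hx.1
      linarith
    have ht : (1:ℝ) ≤ 2*d/(d+1) := by
      rw [le_div_iff₀ hd1]
      have : (2:ℝ) ≤ d := by exact_mod_cast hd
      linarith
    have hx0 : (0:ℝ) < x := lt_of_lt_of_le one_pos (le_trans ht (le_of_lt hx.1))
    have := pow_pos hx0 (d-1)
    nlinarith

-- key real fact: if 1 ≤ r < 2 and r^d (2 - r) ≥ 1 and (r^d(2-r) ≤ 1) then r = 1 ∨ r = β
lemma greal (d : ℕ) (hd : 2 ≤ d) (β : ℝ) (h1 : 1 < β) (h2 : β < 2)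
    (qβ : β ^ (d+1) = 2 * β ^ d - 1) :
    (2*d/(d+1) : ℝ) < β ∧ ∀ r : ℝ, 1 ≤ r → r < 2 → r ^ d * (2 - r) = 1 → r = 1 ∨ r = β := by
  have hd1 : (0:ℝ) < (d:ℝ) + 1 := by positivity
  have hdr : (2:ℝ) ≤ d := by exact_mod_cast hd
  have ht1 : (1:ℝ) < 2*d/(d+1) := by rw [lt_div_iff₀ hd1]; linarith
  have ht2 : (2*d/(d+1) : ℝ) < 2 := by rw [div_lt_iff₀ hd1]; linarith
  have gβ : β ^ d * (2 - β) = 1 := by nlinarith [qβ, pow_succ β d]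
  have g1 : (1:ℝ) ^ d * (2 - 1) = 1 := by norm_num
  have htβ : (2*d/(d+1) : ℝ) < β := by
    by_contra hc
    push_neg at hc
    have := gmono d hd (Set.mem_Icc.mpr ⟨le_refl 1, le_trans h1.le hc⟩)
      (Set.mem_Icc.mpr ⟨h1.le, hc⟩) h1
    simp only at this
    rw [g1, gβ] at this
    exact lt_irrefl 1 this
  refine ⟨htβ, fun r hr1 hr2 hgr => ?_⟩
  rcases eq_or_lt_of_le hr1 with h | h
  · exact Or.inl h.symm
  right
  by_contra hne
  rcases lt_trichotomy r β with hlt | heq | hgt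
  · rcases le_or_gt r (2*d/(d+1)) with hle | hgtt
    · have := gmono d hd (Set.mem_Icc.mpr ⟨le_refl 1, ht1.le⟩)
        (Set.mem_Icc.mpr ⟨hr1, hle⟩) h
      simp only at this
      rw [g1, hgr] at this
      exact lt_irrefl 1 this
    · have := ganti d hd (Set.mem_Icc.mpr ⟨hgtt.le, hr2.le⟩)
        (Set.mem_Icc.mpr ⟨htβ.le, h2.le⟩) hlt
      simp only at this
      rw [gβ, hgr] at this
      exact lt_irrefl 1 this
  · exact hne heq
  · have := ganti d hd (Set.mem_Icc.mpr ⟨htβ.le, h2.le⟩)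
      (Set.mem_Icc.mpr ⟨le_trans htβ.le hgt.le, hr2.le⟩) hgt
    simp only at this
    rw [gβ, hgr] at this
    exact lt_irrefl 1 this

lemma croots (d : ℕ) (hd : 2 ≤ d) (β : ℝ) (h1 : 1 < β) (h2 : β < 2)
    (qβ : β ^ (d+1) = 2 * β ^ d - 1) (z : ℂ)
    (hz : z ^ d = ∑ i ∈ Finset.range d, z ^ i) (hz1 : 1 ≤ ‖z‖) :
    z = (β : ℂ) := by
  have hz_ne : z ≠ 1 := by
    intro h
    rw [h] at hz
    have h1d : (1:ℂ) = d := by simpa using hz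
    have : (d:ℕ) = 1 := by exact_mod_cast h1d.symm
    omega
  -- z^d * (2 - z) = 1
  have hgeom := geom_sum_mul z d
  rw [← hz] at hgeom
  have hkey : z ^ d * (2 - z) = 1 := by linear_combination -hgeom
  set r := ‖z‖ with hr
  have hr0 : (0:ℝ) < r := lt_of_lt_of_le one_pos hz1
  have hrd0 : (0:ℝ) < r ^ d := pow_pos hr0 d
  have habs : r ^ d * ‖2 - z‖ = 1 := by
    rw [← norm_pow, ← norm_mul, hkey, norm_one]
  -- triangle: r^d ≤ ∑ r^i
  set S := ∑ i ∈ Finset.range d, r ^ i with hSdef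
  have hS0 : 0 ≤ S := Finset.sum_nonneg fun i _ => pow_nonneg hr0.le i
  have htri : r ^ d ≤ S := by
    calc r ^ d = ‖z ^ d‖ := by rw [norm_pow]
    _ = ‖∑ i ∈ Finset.range d, z ^ i‖ := by rw [hz]
    _ ≤ ∑ i ∈ Finset.range d, ‖z ^ i‖ := norm_sum_le _ _
    _ = S := by simp [norm_pow, hSdef, hr]
  have hSgeom : S * (r - 1) = r ^ d - 1 := geom_sum_mul r d
  -- r < 2
  have hr2 : r < 2 := by
    by_contra hc
    push_neg at hc
    nlinarith [mul_nonneg hS0 (by linarith : (0:ℝ) ≤ r - 2)]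
  -- g(r) ≥ 1
  have hg_ge : 1 ≤ r ^ d * (2 - r) := by
    nlinarith [mul_nonneg (sub_nonneg.2 htri) (by linarith : (0:ℝ) ≤ r - 1)]
  -- |2 - z| ≥ 2 - r
  have htri2 : 2 - r ≤ ‖2 - z‖ := by
    have h := norm_add_le (2 - z) z
    simp only [sub_add_cancel] at h
    have : ‖(2:ℂ)‖ = 2 := by norm_num
    rw [this] at h
    linarith
  -- g(r) ≤ 1
  have hg_le : r ^ d * (2 - r) ≤ 1 := by
    calc r ^ d * (2 - r) ≤ r ^ d * ‖2 - z‖ := by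
          apply mul_le_mul_of_nonneg_left htri2 hrd0.le
    _ = 1 := habs
  have hg_eq : r ^ d * (2 - r) = 1 := le_antisymm hg_le hg_ge
  -- |2 - z| = 2 - r hence z real
  have habs_eq : ‖2 - z‖ = 2 - r := by
    have : r ^ d * ‖2 - z‖ = r ^ d * (2 - r) := by rw [habs, hg_eq]
    exact mul_left_cancel₀ (ne_of_gt hrd0) this
  have hre : z.re = r ∧ z.im = 0 := by
    have h1' : ‖2 - z‖ ^ 2 = (2 - r) ^ 2 := by rw [habs_eq]
    have h2' : (2 - z.re) ^ 2 + z.im ^ 2 = (2 - r) ^ 2 := by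
      rw [← h1', Complex.sq_norm, Complex.normSq_apply]
      simp [Complex.sub_re, Complex.sub_im]
      ring
    have h3' : z.re ^ 2 + z.im ^ 2 = r ^ 2 := by
      rw [hr, Complex.sq_norm, Complex.normSq_apply]; ring
    constructor
    · nlinarith
    · nlinarith
  have hzr : z = (r : ℂ) := by
    apply Complex.ext
    · simp [hre.1]
    · simp [hre.2]
  rcases (greal d hd β h1 h2 qβ).2 r hz1 hr2 hg_eq with h | h
  · exact absurd (by rw [hzr, h]; norm_num) hz_ne
  · rw [hzr, h]


lemma prod_le_one' (s : Multiset ℝ) (h : ∀ x ∈ s, 0 ≤ x ∧ x ≤ 1) : s.prod ≤ 1 ∧ 0 ≤ s.prod := by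
  induction s using Multiset.induction_on with
  | empty => simp
  | cons a t ih =>
    simp only [Multiset.prod_cons]
    have ha := h a (Multiset.mem_cons_self a t)
    have ht := ih fun x hx => h x (Multiset.mem_cons_of_mem hx)
    constructor
    · calc a * t.prod ≤ 1 * 1 := by
            apply mul_le_mul ha.2 ht.1 ht.2 zero_le_one
      _ = 1 := by norm_num
    · exact mul_nonneg ha.1 ht.2

lemma prod_lt_one' (s : Multiset ℝ) (h0 : s ≠ 0) (h : ∀ x ∈ s, 0 ≤ x ∧ x < 1) : s.prod < 1 := by
  obtain ⟨a, ha⟩ := Multiset.exists_mem_of_ne_zero h0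
  obtain ⟨t, rfl⟩ := Multiset.exists_cons_of_mem ha
  rw [Multiset.prod_cons]
  have ha' := h a (Multiset.mem_cons_self a t)
  have ht := prod_le_one' t fun x hx => ⟨(h x (Multiset.mem_cons_of_mem hx)).1,
    (h x (Multiset.mem_cons_of_mem hx)).2.le⟩
  calc a * t.prod ≤ a * 1 := by
        apply mul_le_mul_of_nonneg_left ht.1 ha'.1
  _ = a := by ring
  _ < 1 := ha'.2



lemma dvd_eval_one (d : ℕ) (hd : 2 ≤ d) (β : ℝ) (h1 : 1 < β) (h2 : β < 2)
    (hβ : β ^ d = ∑ i ∈ Finset.range d, β ^ i) :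
    ∀ G : Polynomial ℤ, Polynomial.aeval β G = 0 → ((d:ℤ) - 1) ∣ G.eval 1 := by
  have qβ : β ^ (d+1) = 2 * β ^ d - 1 := by
    have hg := geom_sum_mul β d
    rw [← hβ] at hg
    linear_combination hg
  set p : Polynomial ℤ := X ^ d - ∑ i ∈ Finset.range d, X ^ i with hp
  have hdegS : (∑ i ∈ Finset.range d, (X:Polynomial ℤ) ^ i).degree < (d : WithBot ℕ) := by
    apply lt_of_le_of_lt (degree_sum_le _ _)
    rw [Finset.sup_lt_iff (by exact_mod_cast WithBot.bot_lt_coe d)]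
    intro i hi
    rw [degree_X_pow]
    exact_mod_cast Finset.mem_range.mp hi
  have hpm : p.Monic := monic_X_pow_sub hdegS
  have hpdeg : p.degree = d := by
    rw [hp, degree_sub_eq_left_of_degree_lt (by rw [degree_X_pow]; exact hdegS),
      degree_X_pow]
  have hpnatdeg : p.natDegree = d := natDegree_eq_of_degree_eq_some hpdeg
  have hpaeval : Polynomial.aeval β p = 0 := by
    rw [hp]
    simp only [map_sub, map_sum, map_pow, aeval_X]
    rw [hβ]; ring
  have hint : IsIntegral ℤ β := ⟨p, hpm, hpaeval⟩
  have hmdvd : minpoly ℤ β ∣ p := minpoly.isIntegrallyClosed_dvd hint hpaeval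
  set m := minpoly ℤ β with hm
  obtain ⟨h, hph⟩ := hmdvd
  have hmm : m.Monic := minpoly.monic hint
  have hhm : h.Monic := hmm.of_mul_monic_left (hph ▸ hpm)
  have hpc0 : p.coeff 0 = -1 := by
    rw [hp]
    simp only [coeff_sub, coeff_X_pow, Polynomial.finset_sum_coeff]
    rw [if_neg (by omega), Finset.sum_eq_single 0]
    · simp
    · intro i hi hne
      exact if_neg (by omega)
    · intro hh
      simp at hh
      omega
  -- h has no root at β (over ℝ)
  have hβh : Polynomial.aeval β h ≠ 0 := by
    intro hc
    have hmβ : Polynomial.aeval β m = 0 := minpoly.aeval ℤ β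
    have hdm : (X - C β) ∣ m.map (algebraMap ℤ ℝ) := by
      rw [dvd_iff_isRoot, IsRoot, eval_map, ← aeval_def]
      exact hmβ
    have hdh : (X - C β) ∣ h.map (algebraMap ℤ ℝ) := by
      rw [dvd_iff_isRoot, IsRoot, eval_map, ← aeval_def]
      exact hc
    obtain ⟨u, hu⟩ := hdm
    obtain ⟨v, hv⟩ := hdh
    -- over ℝ
    have hgR := geom_sum_mul (X : Polynomial ℝ) d
    have hpR : p.map (algebraMap ℤ ℝ) = X ^ d - ∑ i ∈ Finset.range d, X ^ i := by
      rw [hp]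
      simp [Polynomial.map_sub, Polynomial.map_sum, Polynomial.map_pow, Polynomial.map_X]
    have hfact : p.map (algebraMap ℤ ℝ) = (X - C β)^2 * (u * v) := by
      rw [hph, Polynomial.map_mul, hu, hv]; ring
    have hR : (X:Polynomial ℝ) ^ (d+1) - 2 * X ^ d + 1 =
        (X - C β)^2 * ((X - 1) * (u * v)) := by
      have : (X:Polynomial ℝ) ^ (d+1) - 2 * X ^ d + 1 =
          (X - 1) * (X ^ d - ∑ i ∈ Finset.range d, X ^ i) := by
        linear_combination hgR
      rw [this, ← hpR, hfact]; ring
    -- derivative of both sides at β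
    have hder := congrArg (fun q => Polynomial.eval β (Polynomial.derivative q)) hR
    simp only [Polynomial.derivative_add, Polynomial.derivative_sub, derivative_X_pow,
      Polynomial.derivative_mul, Polynomial.derivative_one, Polynomial.derivative_ofNat,
      Polynomial.eval_add, Polynomial.eval_sub, Polynomial.eval_mul, Polynomial.eval_pow,
      Polynomial.eval_ofNat, Polynomial.eval_C, Polynomial.eval_X, Polynomial.eval_one,
      Polynomial.derivative_C] at hder
    simp only [sub_self] at hder
    simp only [derivative_pow, derivative_sub, derivative_X, derivative_C, eval_zero,
      eval_mul, eval_sub, eval_C, eval_X, eval_pow, eval_one, sub_self, mul_zero, zero_mul,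
      add_zero, zero_add, mul_one, zero_pow, ne_eq, OfNat.ofNat_ne_zero,
      not_false_eq_true, eval_natCast] at hder
    push_cast at hder
    -- hder : (d+1) β^d - 2 * (d * β^(d-1)) = 0-ish
    have hβt := (greal d hd β h1 h2 qβ).1
    have hβ0 : (0:ℝ) < β := lt_trans one_pos h1
    have hpow : β ^ d = β ^ (d-1) * β := by
      rw [← pow_succ]; congr 1; omega
    have hd1 : (0:ℝ) < (d:ℝ) + 1 := by positivity
    have hineq : 2 * (d:ℝ) < (d+1) * β := by
      have := (div_lt_iff₀ hd1).mp hβt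
      linarith
    have hpos : (0:ℝ) < β ^ (d-1) := pow_pos hβ0 _
    norm_num at hder
    have hprod := mul_pos hpos (show (0:ℝ) < ((d:ℝ)+1)*β - 2*d by linarith)
    nlinarith [hder, hpow, hprod]
  -- h is constant
  have hc0 : m.coeff 0 * h.coeff 0 = -1 := by rw [← mul_coeff_zero, ← hph, hpc0]
  have hhconst : h.natDegree = 0 := by
    by_contra hne
    have hposdeg : 0 < h.natDegree := Nat.pos_of_ne_zero hne
    set hcc : Polynomial ℂ := h.map (algebraMap ℤ ℂ) with hch
    have hcm : hcc.Monic := hhm.map _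
    have hcdeg : hcc.natDegree = h.natDegree := hhm.natDegree_map _
    have hsplits : Splits hcc := IsAlgClosed.splits hcc
    have hprodeq := hsplits.coeff_zero_eq_prod_roots_of_monic hcm
    have hcard : hcc.roots.card = hcc.natDegree :=
      (splits_iff_card_roots.mp hsplits)
    have hcoeff : hcc.coeff 0 = ((h.coeff 0 : ℤ) : ℂ) := by simp [hch, coeff_map]
    have habs1 : ‖hcc.coeff 0‖ = 1 := by
      have hunit : h.coeff 0 = 1 ∨ h.coeff 0 = -1 := by
        have : IsUnit (h.coeff 0) := IsUnit.of_mul_eq_one (-(m.coeff 0))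
          (by linear_combination -hc0)
        exact Int.isUnit_iff.mp this
      rcases hunit with h' | h' <;> rw [hcoeff, h'] <;> simp
    -- all roots have abs < 1
    have hroots : ∀ z ∈ hcc.roots, ‖z‖ < 1 := by
      intro z hz
      have hz0 : hcc ≠ 0 := hcm.ne_zero
      have hzr : Polynomial.eval z hcc = 0 := (Polynomial.mem_roots hz0).mp hz
      -- z is a root of p over ℂ
      have hpz : z ^ d = ∑ i ∈ Finset.range d, z ^ i := by
        have hpmap : p.map (algebraMap ℤ ℂ) =
            X ^ d - ∑ i ∈ Finset.range d, X ^ i := by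
          rw [hp]
          simp [Polynomial.map_sub, Polynomial.map_sum, Polynomial.map_pow, Polynomial.map_X]
        have : Polynomial.eval z (p.map (algebraMap ℤ ℂ)) = 0 := by
          rw [hph, Polynomial.map_mul, Polynomial.eval_mul, ← hch, hzr, mul_zero]
        rw [hpmap] at this
        simp only [Polynomial.eval_sub, Polynomial.eval_pow, Polynomial.eval_X,
          Polynomial.eval_finset_sum] at this
        have := sub_eq_zero.mp this
        simpa using this
      have hzneβ : z ≠ (β : ℂ) := by
        intro hzeq
        have : Polynomial.eval ((β:ℝ):ℂ) hcc = 0 := by rw [← hzeq]; exact hzr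
        rw [hch, Polynomial.eval_map, ← Polynomial.aeval_def] at this
        rw [show ((β:ℝ):ℂ) = algebraMap ℝ ℂ β from rfl,
          Polynomial.aeval_algebraMap_apply] at this
        have : Polynomial.aeval β h = 0 := by
          have h0 := this
          simp only [Complex.coe_algebraMap, Complex.ofReal_eq_zero] at h0
          exact_mod_cast h0
        exact hβh this
      by_contra hge
      push_neg at hge
      exact hzneβ (croots d hd β h1 h2 qβ z hpz hge)
    -- product of roots
    have habsprod : (hcc.roots.map (fun z => ‖z‖)).prod = 1 := by
      have h1' := congrArg norm hprodeq
      rw [habs1, norm_mul, norm_pow, norm_neg, norm_one, one_pow, one_mul] at h1'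
      have hmp : (hcc.roots.map (fun z => ‖z‖)).prod = ‖hcc.roots.prod‖ :=
        (map_multiset_prod (normHom : ℂ →*₀ ℝ) _).symm
      rw [hmp]
      exact h1'.symm
    have hne0 : hcc.roots.map (fun z => ‖z‖) ≠ 0 := by
      intro hh0
      have := Multiset.card_eq_zero.mpr hh0
      rw [Multiset.card_map, hcard, hcdeg] at this
      omega
    have hlt := prod_lt_one' (hcc.roots.map (fun z => ‖z‖)) hne0 (by
      intro x hx
      obtain ⟨z, hz, rfl⟩ := Multiset.mem_map.mp hx
      exact ⟨norm_nonneg z, hroots z hz⟩)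
    rw [habsprod] at hlt
    exact lt_irrefl 1 hlt
  have hh1 : h = 1 := eq_one_of_monic_natDegree_zero hhm hhconst
  have hmp : m = p := by rw [hph, hh1, mul_one]
  have hpeval1 : p.eval 1 = 1 - d := by
    rw [hp]
    simp [Polynomial.eval_finset_sum]
  intro G hG
  obtain ⟨H, hH⟩ := minpoly.isIntegrallyClosed_dvd hint hG
  rw [← hm, hmp] at hH
  refine ⟨-H.eval 1, ?_⟩
  rw [hH, Polynomial.eval_mul, hpeval1]
  ring



/-- For the d-Bonacci number `β`, every element of `ℤ[β]` is congruent modulo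
`(β-1)ℤ[β]` to exactly one of `0, 1, ..., d-2`; equivalently the quotient ring
`ℤ[β]/(β-1)` has exactly `d-1` elements. -/
theorem dBonacci_quotient_card (d : ℕ) (hd : 2 ≤ d) (β : ℝ) (h1 : 1 < β) (h2 : β < 2)
    (hβ : β ^ d = ∑ i ∈ Finset.range d, β ^ i)
    (b : Algebra.adjoin ℤ ({β} : Set ℝ)) (hb : (b : ℝ) = β - 1) :
    (∀ x ∈ Algebra.adjoin ℤ ({β} : Set ℝ),
      ∃! j : ℕ, j ≤ d - 2 ∧ ∃ z ∈ Algebra.adjoin ℤ ({β} : Set ℝ), x - (j : ℝ) = (β - 1) * z) ∧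
    Nat.card (Algebra.adjoin ℤ ({β} : Set ℝ) ⧸ Ideal.span {b}) = d - 1 := by
  revert b
  set A := Algebra.adjoin ℤ ({β} : Set ℝ) with hA
  intro b hb
  have hβA : β ∈ A := Algebra.subset_adjoin rfl
  -- the witness w with (β-1)*w = d-1
  have hW : ∃ w ∈ A, ((d:ℝ) - 1) = (β - 1) * w := by
    refine ⟨(∑ i ∈ Finset.range d, β ^ i) - ∑ k ∈ Finset.range d, ∑ i ∈ Finset.range k, β ^ i,
      ?_, ?_⟩
    · exact sub_mem (sum_mem fun i _ => pow_mem hβA i)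
        (sum_mem fun k _ => sum_mem fun i _ => pow_mem hβA i)
    · have hg : ∀ k : ℕ, (β - 1) * ∑ i ∈ Finset.range k, β ^ i = β ^ k - 1 := by
        intro k
        have := geom_sum_mul β k
        linarith [this]
      rw [mul_sub, hg, Finset.mul_sum]
      rw [Finset.sum_congr rfl fun k _ => hg k]
      rw [Finset.sum_sub_distrib]
      simp only [Finset.sum_const, Finset.card_range, nsmul_eq_mul, mul_one]
      rw [← hβ]
      ring
  obtain ⟨w, hwA, hw⟩ := hW
  -- existence of an integer representative
  have hex : ∀ x ∈ A, ∃ n : ℤ, ∃ z ∈ A, x - (n:ℝ) = (β - 1) * z := by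
    intro x hx
    induction hx using Algebra.adjoin_induction with
    | mem y hy =>
      rw [Set.mem_singleton_iff] at hy
      subst hy
      exact ⟨1, 1, one_mem A, by push_cast; ring⟩
    | algebraMap r => exact ⟨r, 0, zero_mem A, by push_cast; simp⟩
    | add x y hxA hyA ihx ihy =>
      obtain ⟨n, z, hzA, hz⟩ := ihx
      obtain ⟨m, u, huA, hu⟩ := ihy
      exact ⟨n + m, z + u, add_mem hzA huA, by push_cast; linarith [hz, hu]⟩
    | mul x y hxA hyA ihx ihy =>
      obtain ⟨n, z, hzA, hz⟩ := ihx
      obtain ⟨m, u, huA, hu⟩ := ihy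
      refine ⟨n * m, x * u + (m:ℝ) * z, ?_, ?_⟩
      · exact add_mem (mul_mem hxA huA) (mul_mem (intCast_mem A m) hzA)
      · push_cast
        linear_combination x * hu + (m:ℝ) * hz
  -- key divisibility
  have hkey : ∀ n : ℤ, ∀ z ∈ A, (n:ℝ) = (β - 1) * z → ((d:ℤ) - 1) ∣ n := by
    intro n z hzA hz
    rw [hA, Algebra.adjoin_singleton_eq_range_aeval] at hzA
    obtain ⟨F, hF⟩ := hzA
    have hzval : Polynomial.aeval β F = z := hF
    have hG : Polynomial.aeval β ((X - C 1) * F - C n) = 0 := by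
      simp only [map_sub, map_mul, aeval_X, aeval_C]
      rw [hzval]
      simp only [algebraMap_int_eq, eq_intCast, Int.cast_one]
      rw [← hz]; ring
    have := dvd_eval_one d hd β h1 h2 hβ _ hG
    simp only [Polynomial.eval_sub, Polynomial.eval_mul, Polynomial.eval_X,
      Polynomial.eval_C, Polynomial.eval_one, sub_self, zero_mul, zero_sub,
      dvd_neg] at this
    exact this
  constructor
  · -- part 1
    intro x hx
    obtain ⟨n, z, hzA, hz⟩ := hex x hx
    have hd1 : (0:ℤ) < (d:ℤ) - 1 := by
      have : (2:ℤ) ≤ d := by exact_mod_cast hd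
      omega
    set q : ℤ := n / ((d:ℤ) - 1) with hq
    set jz : ℤ := n % ((d:ℤ) - 1) with hjz
    have hj0 : 0 ≤ jz := Int.emod_nonneg n (by omega)
    have hjlt : jz < (d:ℤ) - 1 := Int.emod_lt_of_pos n hd1
    have hnq : n = ((d:ℤ) - 1) * q + jz := (Int.mul_ediv_add_emod n _).symm
    refine ⟨jz.toNat, ⟨?_, z + (q:ℝ) * w, ?_, ?_⟩, ?_⟩
    · omega
    · exact add_mem hzA (mul_mem (intCast_mem A q) hwA)
    · have hjr : ((jz.toNat : ℕ) : ℝ) = (jz : ℝ) := by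
        norm_cast
        omega
      rw [hjr]
      have hnr : (n : ℝ) = ((d:ℝ) - 1) * (q:ℝ) + (jz:ℝ) := by exact_mod_cast hnq
      calc x - (jz:ℝ) = (x - n) + ((d:ℝ) - 1) * (q:ℝ) := by rw [hnr]; ring
      _ = (β - 1) * z + ((β - 1) * w) * q := by rw [hz, ← hw]
      _ = (β - 1) * (z + (q:ℝ) * w) := by ring
    · -- uniqueness
      rintro j ⟨hjle, u, huA, hu⟩
      have hj2 : ((j:ℤ) : ℝ) = (j : ℝ) := by norm_cast
      -- (j - jz.toNat) is divisible by d-1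
      have hdvd : ((d:ℤ) - 1) ∣ ((j:ℤ) - jz) := by
        apply hkey _ (z + (q:ℝ) * w - u)
          (sub_mem (add_mem hzA (mul_mem (intCast_mem A q) hwA)) huA)
        have hx1 : x - (jz:ℝ) = (β - 1) * (z + (q:ℝ) * w) := by
          have hjr : ((jz.toNat : ℕ) : ℝ) = (jz : ℝ) := by norm_cast; omega
          have hnr : (n : ℝ) = ((d:ℝ) - 1) * (q:ℝ) + (jz:ℝ) := by exact_mod_cast hnq
          calc x - (jz:ℝ) = (x - n) + ((d:ℝ) - 1) * (q:ℝ) := by rw [hnr]; ring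
          _ = (β - 1) * z + ((β - 1) * w) * q := by rw [hz, ← hw]
          _ = (β - 1) * (z + (q:ℝ) * w) := by ring
        push_cast
        linarith [hu, hx1]
      -- conclude j = jz.toNat
      rcases eq_or_ne ((j:ℤ) - jz) 0 with h0 | h0
      · omega
      · exfalso
        have hle := Int.le_of_dvd (abs_pos.mpr h0) ((dvd_abs _ _).mpr hdvd)
        have hjZ : (j:ℤ) ≤ (d:ℤ) - 2 := by omega
        -- |j - jz| ≤ d - 2 < d - 1
        have : |(j:ℤ) - jz| ≤ (d:ℤ) - 2 := by
          rw [abs_le]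
          omega
        omega
  · -- part 2: cardinality
    set I : Ideal A := Ideal.span {b} with hI
    set ψ : ℤ →+* A ⧸ I := (Ideal.Quotient.mk I).comp (algebraMap ℤ A) with hψ
    have hcast : ∀ n : ℤ, ((algebraMap ℤ A n : A) : ℝ) = (n : ℝ) := by
      intro n; simp
    have hsurj : Function.Surjective ψ := by
      intro y
      obtain ⟨a, rfl⟩ := Ideal.Quotient.mk_surjective y
      obtain ⟨n, z, hzA, hz⟩ := hex (a : ℝ) a.2
      refine ⟨n, ?_⟩
      rw [hψ, RingHom.comp_apply]
      rw [Ideal.Quotient.mk_eq_mk_iff_sub_mem]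
      rw [hI, Ideal.mem_span_singleton]
      refine ⟨-⟨z, hzA⟩, ?_⟩
      apply Subtype.ext
      push_cast
      simp only [algebraMap_int_eq, eq_intCast]
      rw [hb]
      linarith [hz]
    have hker : RingHom.ker ψ = Ideal.span {((d:ℤ) - 1)} := by
      ext n
      rw [RingHom.mem_ker, hψ, RingHom.comp_apply, Ideal.Quotient.eq_zero_iff_mem,
        hI, Ideal.mem_span_singleton, Ideal.mem_span_singleton]
      constructor
      · rintro ⟨c, hc⟩
        apply hkey n c c.2
        have hcv := congrArg (Subtype.val) hc
        push_cast at hcv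
        simp only [algebraMap_int_eq, eq_intCast] at hcv
        rw [hb] at hcv
        exact hcv
      · rintro ⟨t, rfl⟩
        refine ⟨⟨w, hwA⟩ * algebraMap ℤ A t, ?_⟩
        apply Subtype.ext
        push_cast
        simp only [algebraMap_int_eq, eq_intCast]
        rw [hb]
        linear_combination (t:ℝ) * hw
    have hequiv : (ℤ ⧸ RingHom.ker ψ) ≃+* A ⧸ I := RingHom.quotientKerEquivOfSurjective hsurj
    rw [hker] at hequiv
    have hzmod := Int.quotientSpanEquivZMod ((d:ℤ) - 1)
    have hnatabs : ((d:ℤ) - 1).natAbs = d - 1 := by omega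
    calc Nat.card (A ⧸ I) = Nat.card (ℤ ⧸ Ideal.span {((d:ℤ) - 1)}) :=
          (Nat.card_congr hequiv.toEquiv).symm
    _ = Nat.card (ZMod ((d:ℤ) - 1).natAbs) := Nat.card_congr hzmod.toEquiv
    _ = ((d:ℤ) - 1).natAbs := Nat.card_zmod _
    _ = d - 1 := hnatabs
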